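/- Let A be a finite nonempty alphabet and let Z be a set of positions over A. If ∑'_{p ∈ Z} (1/|A|)^{⌊len(p)/2⌋} < 1, then Player 2 has a winning strategy for Z. -/

import Mathlib

open scoped ENNReal

variable {A : Type*}

/-- A position `p` is a prefix of the play `x`. -/
def PrefixOfPlay (p : List A) (x : ℕ → A) : Prop :=
  List.ofFn (fun i : Fin p.length => x i) = p

/-- The play `x` is consistent with the Player 1 strategy `s₁`. -/
def Consistent1 (s₁ : List A → A) (x : ℕ → A) : Prop :=
  ∀ n : ℕ, x (2 * n) = s₁ (List.ofFn (fun i : Fin (2 * n) => x i))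

/-- The play `x` is consistent with the Player 2 strategy `s₂`. -/
def Consistent2 (s₂ : List A → A) (x : ℕ → A) : Prop :=
  ∀ n : ℕ, x (2 * n + 1) = s₂ (List.ofFn (fun i : Fin (2 * n + 1) => x i))

/-- Player 1 has a winning strategy for the open set determined by `Z`. -/
def P1Wins (Z : Set (List A)) : Prop :=
  ∃ s₁ : List A → A, ∀ x : ℕ → A, Consistent1 s₁ x → ∃ p ∈ Z, PrefixOfPlay p x

/-- Player 2 has a winning strategy for the open set determined by `Z`. -/
def P2Wins (Z : Set (List A)) : Prop :=
  ∃ s₂ : List A → A, ∀ x : ℕ → A, Consistent2 s₂ x → ¬ ∃ p ∈ Z, PrefixOfPlay p x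


-- helper prefix lemmas
lemma prefix_concat_iff' {p q : List A} {a : A} :
    p <+: q ++ [a] ↔ p <+: q ∨ p = q ++ [a] := by
  constructor
  · intro h
    rcases Nat.lt_or_ge p.length (q ++ [a]).length with hl | hl
    · left
      have := h.take q.length
      rwa [List.take_left' rfl, List.take_of_length_le (by simp at hl ⊢; omega)] at this
    · right; exact h.eq_of_length (le_antisymm h.length_le hl)
  · rintro (h | rfl)
    · exact h.trans (List.prefix_append q [a])
    · exact List.prefix_refl _

lemma concat_prefix_unique {p q : List A} {a b : A}
    (ha : q ++ [a] <+: p) (hb : q ++ [b] <+: p) : a = b := by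
  have := (List.prefix_of_prefix_length_le ha hb (by simp)).eq_of_length (by simp)
  simpa using this

section Phi
attribute [local instance] Classical.propDecidable
variable [Fintype A] [Nonempty A]

noncomputable def gWt (q p : List A) : ℝ≥0∞ :=
  if q <+: p then ((1 : ℝ≥0∞) / Fintype.card A) ^ (p.length / 2 - q.length / 2)
  else if p <+: q then 1 else 0

noncomputable def Phi (Z : Set (List A)) (q : List A) : ℝ≥0∞ :=
  ∑' p : Z, gWt q p.1

lemma card_ne_zero' : (Fintype.card A : ℝ≥0∞) ≠ 0 := by
  simp [Fintype.card_ne_zero]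

lemma card_ne_top' : (Fintype.card A : ℝ≥0∞) ≠ ⊤ := by simp

lemma Phi_nil (Z : Set (List A)) :
    Phi Z [] = ∑' p : Z, ((1 : ℝ≥0∞) / Fintype.card A) ^ (p.1.length / 2) := by
  unfold Phi gWt
  simp [List.nil_prefix, one_div]

-- Player 1 step: even length
lemma gWt_even_step {q p : List A} (a : A) (hq : q.length % 2 = 0) :
    gWt (q ++ [a]) p ≤ gWt q p := by
  unfold gWt
  by_cases h1 : q ++ [a] <+: p
  · have h2 : q <+: p := (List.prefix_append q [a]).trans h1
    rw [if_pos h1, if_pos h2]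
    have : (q ++ [a]).length / 2 = q.length / 2 := by simp; omega
    rw [this]
  · rw [if_neg h1]
    by_cases h3 : p <+: q ++ [a]
    · rw [if_pos h3]
      rcases prefix_concat_iff'.mp h3 with h4 | h4
      · by_cases h5 : q <+: p
        · have hpq : q = p := h5.eq_of_length (le_antisymm h5.length_le h4.length_le)
          subst hpq
          simp
        · rw [if_neg h5, if_pos h4]
      · exact absurd (h4 ▸ List.prefix_refl _) h1
    · rw [if_neg h3]; positivity

lemma Phi_even_step {Z : Set (List A)} {q : List A} (a : A) (hq : q.length % 2 = 0) :
    Phi Z (q ++ [a]) ≤ Phi Z q :=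
  ENNReal.tsum_le_tsum fun p => gWt_even_step a hq

-- Player 2 step, pointwise
lemma gWt_odd_step {q : List A} (p : List A) (hq : q.length % 2 = 1) :
    ∑ a : A, gWt (q ++ [a]) p ≤ (Fintype.card A : ℝ≥0∞) * gWt q p := by
  by_cases h1 : q <+: p
  · by_cases h2 : p = q
    · subst h2
      have : ∀ a : A, gWt (p ++ [a]) p = 1 := by
        intro a
        unfold gWt
        rw [if_neg, if_pos (List.prefix_append p [a])]
        intro hc
        exact absurd (hc.length_le) (by simp)
      simp only [this, Finset.sum_const, Finset.card_univ, nsmul_eq_mul, mul_one]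
      unfold gWt
      simp
    · -- q strict prefix of p
      have hlt : q.length < p.length :=
        lt_of_le_of_ne h1.length_le (fun hc => h2 (h1.eq_of_length hc).symm)
      set a0 : A := p.get ⟨q.length, hlt⟩ with ha0
      have hpre : q ++ [a0] <+: p := List.concat_get_prefix h1 hlt
      have hsum : ∑ a : A, gWt (q ++ [a]) p = gWt (q ++ [a0]) p := by
        apply Finset.sum_eq_single
        · intro b _ hb
          unfold gWt
          rw [if_neg, if_neg]
          · intro hc
            rcases prefix_concat_iff'.mp hc with h4 | h4
            · exact h2 ((h1.eq_of_length (le_antisymm h1.length_le h4.length_le)).symm)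
            · subst h4
              exact hb (concat_prefix_unique hpre (List.prefix_refl _)).symm
          · intro hc
            exact hb (concat_prefix_unique hc hpre)
        · simp
      rw [hsum]
      unfold gWt
      rw [if_pos hpre, if_pos h1]
      have e1 : (q ++ [a0]).length / 2 = q.length / 2 + 1 := by simp; omega
      have e2 : p.length / 2 ≥ q.length / 2 + 1 := by
        rcases Nat.lt_or_ge p.length (q.length + 1) with h | h
        · omega
        · omega
      rw [e1]
      have : p.length / 2 - q.length / 2 = (p.length / 2 - (q.length / 2 + 1)) + 1 := by omega
      rw [this, pow_succ]
      rw [mul_comm ((Fintype.card A : ℝ≥0∞))]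
      rw [mul_assoc, one_div, ENNReal.inv_mul_cancel card_ne_zero' card_ne_top', mul_one]
  · by_cases h3 : p <+: q
    · have : ∀ a : A, gWt (q ++ [a]) p = 1 := by
        intro a
        unfold gWt
        rw [if_neg, if_pos (h3.trans (List.prefix_append q [a]))]
        intro hc
        exact h1 ((List.prefix_append q [a]).trans hc)
      simp only [this, Finset.sum_const, Finset.card_univ, nsmul_eq_mul, mul_one]
      unfold gWt
      rw [if_neg h1, if_pos h3, mul_one]
    · have : ∀ a : A, gWt (q ++ [a]) p = 0 := by
        intro a
        unfold gWt
        rw [if_neg, if_neg]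
        · intro hc
          rcases prefix_concat_iff'.mp hc with h4 | h4
          · exact h3 h4
          · exact h1 (h4 ▸ List.prefix_append q [a])
        · intro hc
          exact h1 ((List.prefix_append q [a]).trans hc)
      rw [Finset.sum_eq_zero (fun a _ => this a)]
      exact zero_le

lemma Phi_odd_sum {Z : Set (List A)} {q : List A} (hq : q.length % 2 = 1) :
    ∑ a : A, Phi Z (q ++ [a]) ≤ (Fintype.card A : ℝ≥0∞) * Phi Z q := by
  unfold Phi
  rw [← Summable.tsum_finsetSum (fun a _ => ENNReal.summable)]
  calc ∑' p : Z, ∑ a : A, gWt (q ++ [a]) p.1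
      ≤ ∑' p : Z, (Fintype.card A : ℝ≥0∞) * gWt q p.1 :=
        ENNReal.tsum_le_tsum fun p => gWt_odd_step p.1 hq
    _ = (Fintype.card A : ℝ≥0∞) * ∑' p : Z, gWt q p.1 := ENNReal.tsum_mul_left

noncomputable def str2 (Z : Set (List A)) (q : List A) : A :=
  (Finset.exists_min_image Finset.univ (fun a => Phi Z (q ++ [a]))
    Finset.univ_nonempty).choose

lemma str2_min (Z : Set (List A)) (q : List A) (b : A) :
    Phi Z (q ++ [str2 Z q]) ≤ Phi Z (q ++ [b]) := by
  have := (Finset.exists_min_image Finset.univ (fun a => Phi Z (q ++ [a]))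
    Finset.univ_nonempty).choose_spec
  exact this.2 b (Finset.mem_univ b)

lemma str2_le {Z : Set (List A)} {q : List A} (hq : q.length % 2 = 1)
    (hfin : Phi Z q ≠ ⊤) : Phi Z (q ++ [str2 Z q]) ≤ Phi Z q := by
  have h1 : (Fintype.card A : ℝ≥0∞) * Phi Z (q ++ [str2 Z q]) ≤
      (Fintype.card A : ℝ≥0∞) * Phi Z q := by
    calc (Fintype.card A : ℝ≥0∞) * Phi Z (q ++ [str2 Z q])
        = Finset.univ.card • Phi Z (q ++ [str2 Z q]) := by
          simp [nsmul_eq_mul]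
      _ ≤ ∑ a : A, Phi Z (q ++ [a]) :=
          Finset.card_nsmul_le_sum _ _ _ (fun b _ => str2_min Z q b)
      _ ≤ _ := Phi_odd_sum hq
  exact (ENNReal.mul_le_mul_iff_right card_ne_zero' card_ne_top').mp h1

lemma invariant {Z : Set (List A)} (hΦ : Phi Z [] ≠ ⊤) {x : ℕ → A}
    (hx : Consistent2 (str2 Z) x) (n : ℕ) :
    Phi Z (List.ofFn (fun i : Fin n => x i)) ≤ Phi Z [] := by
  induction n with
  | zero => simp
  | succ n ih =>
    have hstep : List.ofFn (fun i : Fin (n+1) => x i) =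
        List.ofFn (fun i : Fin n => x i) ++ [x n] := by
      rw [List.ofFn_succ']
      simp [List.concat_eq_append]
    rw [hstep]
    rcases Nat.even_or_odd n with he | ho
    · refine le_trans (Phi_even_step (x n) ?_) ih
      rw [List.length_ofFn]
      exact Nat.even_iff.mp he
    · rcases ho with ⟨m, hm⟩
      have hxn : x n = str2 Z (List.ofFn (fun i : Fin n => x i)) := by
        subst hm; exact hx m
      rw [hxn]
      refine le_trans (str2_le ?_ ?_) ih
      · simp; omega
      · exact fun hc => hΦ (top_le_iff.mp (hc ▸ ih))

end Phi

theorem sum_lt_one_imp_player2_wins [Fintype A] [Nonempty A] (Z : Set (List A))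
    (h : ∑' p : Z, ((1 : ℝ≥0∞) / Fintype.card A) ^ (p.1.length / 2) < 1) :
    P2Wins Z := by
  have hΦ : Phi Z [] < 1 := by rw [Phi_nil]; exact h
  refine ⟨str2 Z, fun x hx ⟨p, hpZ, hpre⟩ => ?_⟩
  have hpref : List.ofFn (fun i : Fin p.length => x i) = p := hpre
  have h1 : (1 : ℝ≥0∞) ≤ Phi Z p := by
    have h0 := ENNReal.le_tsum (f := fun p' : Z => gWt p p'.1) ⟨p, hpZ⟩
    have : gWt p p = 1 := by simp [gWt, List.prefix_refl]
    rw [this] at h0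
    exact h0
  have h2 : Phi Z p ≤ Phi Z [] := by
    rw [← hpref]
    exact invariant (by exact fun hc => absurd hΦ (by simp [hc])) hx p.length
  exact absurd (lt_of_le_of_lt (h1.trans h2) hΦ) (lt_irrefl 1)
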